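/- For every ε ∈ (0,1), there exists a continuous random variable W on [0,1] (expressible as |X-Y| for i.i.d. X,Y with density α t^{α-1} for suitable α) whose CDF F_W satisfies F_W(x+y) ≤ ε F_W(x) + F_W(y) for all 0 ≤ x ≤ y. -/

import Mathlib

open MeasureTheory ProbabilityTheory

noncomputable def dens (α : ℝ) : ℝ → ENNReal :=
  fun t => if t ∈ Set.Ioc (0 : ℝ) 1 then ENNReal.ofReal (α * t ^ (α - 1)) else 0

noncomputable def mu (α : ℝ) : Measure ℝ := volume.withDensity (dens α)

lemma dens_meas (α : ℝ) : Measurable (dens α) := by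
  unfold dens
  refine Measurable.ite measurableSet_Ioc ?_ measurable_const
  measurability

lemma lint_rpow {r a b : ℝ} (ha : 0 ≤ a) (hab : a ≤ b)
    (hr : -1 < r ∨ (r ≠ -1 ∧ 0 < a)) :
    ∫⁻ t in Set.Ioc a b, ENNReal.ofReal (t ^ r)
      = ENNReal.ofReal ((b ^ (r + 1) - a ^ (r + 1)) / (r + 1)) := by
  have h0 : -1 < r ∨ r ≠ -1 ∧ (0:ℝ) ∉ Set.uIcc a b := by
    rcases hr with h | ⟨h1, h2⟩
    · exact Or.inl h
    · exact Or.inr ⟨h1, Set.notMem_uIcc_of_lt h2 (lt_of_lt_of_le h2 hab)⟩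
  have hint : IntervalIntegrable (fun t : ℝ => t ^ r) volume a b := by
    rcases hr with h | ⟨h1, h2⟩
    · exact intervalIntegral.intervalIntegrable_rpow' h
    · exact intervalIntegral.intervalIntegrable_rpow
        (Or.inr (Set.notMem_uIcc_of_lt h2 (lt_of_lt_of_le h2 hab)))
  have hnn : 0 ≤ᵐ[volume.restrict (Set.Ioc a b)] fun t : ℝ => t ^ r := by
    filter_upwards [ae_restrict_mem measurableSet_Ioc] with t ht
    exact Real.rpow_nonneg (le_trans ha ht.1.le) r
  rw [← MeasureTheory.ofReal_integral_eq_lintegral_ofReal hint.1 hnn,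
    ← intervalIntegral.integral_of_le hab, integral_rpow h0]

lemma mu_Ioc {α : ℝ} (hα : 0 < α) {a b : ℝ} (ha : 0 ≤ a) (hab : a ≤ b) :
    mu α (Set.Ioc a b) = ENNReal.ofReal ((min b 1) ^ α - (min a 1) ^ α) := by
  rw [mu, withDensity_apply _ measurableSet_Ioc]
  have hd : ∀ t, dens α t
      = (Set.Ioc (0:ℝ) 1).indicator (fun t => ENNReal.ofReal (α * t ^ (α - 1))) t := by
    intro t; by_cases ht : t ∈ Set.Ioc (0:ℝ) 1 <;> simp [dens, ht]
  simp_rw [hd]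
  rw [lintegral_indicator measurableSet_Ioc, Measure.restrict_restrict measurableSet_Ioc,
    Set.Ioc_inter_Ioc, max_comm, max_eq_left ha, min_comm]
  set m := min b 1 with hm
  by_cases hcase : a ≤ m
  · have hm1 : m ≤ 1 := min_le_right _ _
    have ha1 : min a 1 = a := min_eq_left (hcase.trans hm1)
    rw [ha1]
    simp_rw [ENNReal.ofReal_mul hα.le]
    rw [lintegral_const_mul' _ _ ENNReal.ofReal_ne_top,
      lint_rpow ha hcase (Or.inl (by linarith))]
    have he : α - 1 + 1 = α := by ring
    rw [he, ← ENNReal.ofReal_mul hα.le, mul_div_cancel₀ _ (ne_of_gt hα)]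
  · push_neg at hcase
    rw [Set.Ioc_eq_empty (by exact fun h => absurd h (not_lt.2 hcase.le)), Measure.restrict_empty, lintegral_zero_measure]
    have hm0 : 0 ≤ m := le_min (ha.trans hab) zero_le_one
    have h1 : m ≤ min a 1 := le_min hcase.le (min_le_right b 1)
    have h2 : m ^ α ≤ (min a 1) ^ α := Real.rpow_le_rpow hm0 h1 hα.le
    exact (ENNReal.ofReal_eq_zero.2 (by linarith)).symm

lemma mu_univ {α : ℝ} (hα : 0 < α) : mu α Set.univ = 1 := by
  have h1 : mu α (Set.Ioc (0:ℝ) 1) = 1 := by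
    rw [mu_Ioc hα le_rfl zero_le_one]
    simp [Real.zero_rpow (ne_of_gt hα), Real.one_rpow]
  have h0 : mu α (Set.Ioc (0:ℝ) 1)ᶜ = 0 := by
    rw [mu, withDensity_apply _ measurableSet_Ioc.compl]
    refine le_antisymm ?_ zero_le
    calc ∫⁻ t in (Set.Ioc (0:ℝ) 1)ᶜ, dens α t
        ≤ ∫⁻ _ in (Set.Ioc (0:ℝ) 1)ᶜ, 0 := by
          refine setLIntegral_mono measurable_const fun t ht => ?_
          simp only [Set.mem_compl_iff] at ht
          simp only [dens, if_neg ht, le_refl]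
      _ = 0 := by simp
  have := measure_add_measure_compl (μ := mu α) (measurableSet_Ioc (a := (0:ℝ)) (b := 1))
  rw [h1, h0, add_zero] at this
  exact this.symm

instance mu_prob {α : ℝ} [Fact (0 < α)] : IsProbabilityMeasure (mu α) :=
  ⟨mu_univ (Fact.out)⟩

lemma rpow_bern {α : ℝ} (hα : 0 < α) (hα1 : α ≤ 1) {a b : ℝ} (ha : 0 < a) (hab : a ≤ b) :
    b ^ α - a ^ α ≤ α * (b - a) * a ^ (α - 1) := by
  have hs : (0:ℝ) ≤ (b - a) / a := div_nonneg (by linarith) ha.le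
  have h := rpow_one_add_le_one_add_mul_self (s := (b - a) / a) (by linarith) hα.le hα1
  have h1 : (1 + (b - a) / a) = b / a := by field_simp; ring
  rw [h1] at h
  have hb : b ^ α = (b / a) ^ α * a ^ α := by
    rw [← Real.mul_rpow (div_nonneg (ha.le.trans hab) ha.le) ha.le, div_mul_cancel₀ _ (ne_of_gt ha)]
  have ham : a ^ (α - 1) = a ^ α / a := by
    rw [Real.rpow_sub ha, Real.rpow_one]
  have hpos : (0:ℝ) < a ^ α := Real.rpow_pos_of_pos ha α
  rw [hb, ham]
  have h2 : (b / a) ^ α * a ^ α ≤ (1 + α * ((b - a) / a)) * a ^ α :=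
    mul_le_mul_of_nonneg_right h hpos.le
  calc (b / a) ^ α * a ^ α - a ^ α ≤ (1 + α * ((b - a) / a)) * a ^ α - a ^ α := by linarith
    _ = α * (b - a) * (a ^ α / a) := by field_simp; ring

lemma min_sub_le {α : ℝ} (hα : 0 < α) {a b : ℝ} (ha : 0 ≤ a) (hab : a ≤ b) :
    (min b 1) ^ α - (min a 1) ^ α ≤ b ^ α - a ^ α := by
  rcases le_total b 1 with hb | hb
  · rw [min_eq_left hb, min_eq_left (hab.trans hb)]
  · rcases le_total a 1 with ha1 | ha1
    · have h1 : (1:ℝ) ≤ b ^ α := Real.one_le_rpow hb hα.le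
      rw [min_eq_right hb, min_eq_left ha1, Real.one_rpow]
      linarith
    · have h2 : a ^ α ≤ b ^ α := Real.rpow_le_rpow ha hab hα.le
      rw [min_eq_right hb, min_eq_right ha1]
      linarith

lemma lower_bound {α : ℝ} (hα : 0 < α) {x : ℝ} (hx : 0 < x) (hx1 : x ≤ 1) :
    ENNReal.ofReal (x ^ (2 * α)) ≤ (mu α).prod (mu α) {p : ℝ × ℝ | |p.1 - p.2| ≤ x} := by
  haveI : IsProbabilityMeasure (mu α) := ⟨mu_univ hα⟩
  have hsub : Set.Ioc 0 x ×ˢ Set.Ioc 0 x ⊆ {p : ℝ × ℝ | |p.1 - p.2| ≤ x} := by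
    intro p hp
    obtain ⟨⟨ha0, hax⟩, hb0, hbx⟩ := hp
    simp only [Set.mem_setOf_eq]
    rw [abs_le]
    constructor <;> linarith
  refine le_trans ?_ (measure_mono hsub)
  rw [Measure.prod_prod, mu_Ioc hα le_rfl hx.le, min_eq_left hx1]
  have h0 : min (0:ℝ) 1 = 0 := min_eq_left zero_le_one
  rw [h0, Real.zero_rpow (ne_of_gt hα), sub_zero,
    ← ENNReal.ofReal_mul (Real.rpow_nonneg hx.le _)]
  refine ENNReal.ofReal_le_ofReal (le_of_eq ?_)
  rw [← Real.rpow_add hx]; ring_nf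

set_option maxHeartbeats 1000000 in
lemma incr_bound {α : ℝ} (hα : 0 < α) (hα2 : α < 1/2) {x y : ℝ}
    (hx : 0 < x) (hxy : x ≤ y) (hx1 : x < 1) :
    (mu α).prod (mu α) {p : ℝ × ℝ | p.2 - p.1 ∈ Set.Ioc y (x + y)}
      ≤ ENNReal.ofReal ((α + α ^ 2 / (1 - 2 * α)) * x ^ (2 * α)) := by
  haveI : IsProbabilityMeasure (mu α) := ⟨mu_univ hα⟩
  have hα1 : α < 1 := by linarith
  have hy : 0 ≤ y := hx.le.trans hxy
  have hA : MeasurableSet {p : ℝ × ℝ | p.2 - p.1 ∈ Set.Ioc y (x + y)} :=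
    (measurable_snd.sub measurable_fst) measurableSet_Ioc
  rw [Measure.prod_apply hA]
  set F : ℝ → ENNReal := fun t => mu α (Set.Ioc (t + y) (t + (x + y))) with hF
  have hpre : ∀ t : ℝ, (mu α) (Prod.mk t ⁻¹' {p : ℝ × ℝ | p.2 - p.1 ∈ Set.Ioc y (x + y)})
      = F t := by
    intro t
    rw [hF]
    congr 1
    ext b
    simp only [Set.mem_preimage, Set.mem_setOf_eq, Set.mem_Ioc]
    constructor
    · rintro ⟨h1, h2⟩; exact ⟨by linarith, by linarith⟩
    · rintro ⟨h1, h2⟩; exact ⟨by linarith, by linarith⟩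
  simp_rw [hpre]
  have hfin : ∀ᵐ t ∂(volume : Measure ℝ), dens α t < ⊤ := by
    refine ae_of_all _ fun t => ?_
    unfold dens
    split
    · exact ENNReal.ofReal_lt_top
    · simp
  rw [mu, lintegral_withDensity_eq_lintegral_mul_non_measurable _ (dens_meas α) hfin]
  have hind : (dens α * F) = (Set.Ioc (0:ℝ) 1).indicator
      (fun t => ENNReal.ofReal (α * t ^ (α - 1)) * F t) := by
    funext t
    by_cases ht : t ∈ Set.Ioc (0:ℝ) 1 <;>
      simp [dens, ht, Set.indicator_apply]
  rw [hind, lintegral_indicator measurableSet_Ioc]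
  have hsplit : Set.Ioc (0:ℝ) 1 = Set.Ioc 0 x ∪ Set.Ioc x 1 :=
    (Set.Ioc_union_Ioc_eq_Ioc hx.le hx1.le).symm
  rw [hsplit, lintegral_union measurableSet_Ioc (Set.Ioc_disjoint_Ioc_of_le le_rfl)]
  -- pointwise bound on (0, x]
  have hpt1 : ∀ t ∈ Set.Ioc (0:ℝ) x,
      ENNReal.ofReal (α * t ^ (α - 1)) * F t
        ≤ ENNReal.ofReal (α * (α * x * x ^ (α - 1))) * ENNReal.ofReal (t ^ (α - 1)) := by
    intro t ht
    obtain ⟨ht0, htx⟩ := ht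
    have hty : 0 < t + y := by linarith
    have hFle : F t ≤ ENNReal.ofReal (α * x * x ^ (α - 1)) := by
      show mu α (Set.Ioc (t + y) (t + (x + y))) ≤ _
      rw [mu_Ioc hα (by linarith) (by linarith)]
      refine ENNReal.ofReal_le_ofReal ?_
      have h1 := min_sub_le hα (a := t + y) (b := t + (x + y)) (by linarith) (by linarith)
      have h2 := rpow_bern hα hα1.le (a := t + y) (b := t + (x + y)) hty (by linarith)
      have h3 : (t + (x + y)) - (t + y) = x := by ring
      rw [h3] at h2
      have h4 : (t + y) ^ (α - 1) ≤ x ^ (α - 1) :=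
        Real.rpow_le_rpow_of_nonpos hx (by linarith) (by linarith)
      have h5 : α * x * (t + y) ^ (α - 1) ≤ α * x * x ^ (α - 1) :=
        mul_le_mul_of_nonneg_left h4 (by positivity)
      linarith
    calc ENNReal.ofReal (α * t ^ (α - 1)) * F t
        ≤ ENNReal.ofReal (α * t ^ (α - 1)) * ENNReal.ofReal (α * x * x ^ (α - 1)) :=
          mul_le_mul_right hFle _
      _ = ENNReal.ofReal (α * (α * x * x ^ (α - 1))) * ENNReal.ofReal (t ^ (α - 1)) := by
          rw [← ENNReal.ofReal_mul (by positivity), ← ENNReal.ofReal_mul (by positivity)]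
          congr 1
          ring
  -- pointwise bound on (x, 1]
  have hpt2 : ∀ t ∈ Set.Ioc x (1:ℝ),
      ENNReal.ofReal (α * t ^ (α - 1)) * F t
        ≤ ENNReal.ofReal (α ^ 2 * x) * ENNReal.ofReal (t ^ (2 * α - 2)) := by
    intro t ht
    obtain ⟨htx, ht1⟩ := ht
    have ht0 : 0 < t := hx.trans htx
    have hty : 0 < t + y := by linarith
    have hFle : F t ≤ ENNReal.ofReal (α * x * t ^ (α - 1)) := by
      show mu α (Set.Ioc (t + y) (t + (x + y))) ≤ _
      rw [mu_Ioc hα (by linarith) (by linarith)]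
      refine ENNReal.ofReal_le_ofReal ?_
      have h1 := min_sub_le hα (a := t + y) (b := t + (x + y)) (by linarith) (by linarith)
      have h2 := rpow_bern hα hα1.le (a := t + y) (b := t + (x + y)) hty (by linarith)
      have h3 : (t + (x + y)) - (t + y) = x := by ring
      rw [h3] at h2
      have h4 : (t + y) ^ (α - 1) ≤ t ^ (α - 1) :=
        Real.rpow_le_rpow_of_nonpos ht0 (by linarith) (by linarith)
      have h5 : α * x * (t + y) ^ (α - 1) ≤ α * x * t ^ (α - 1) :=
        mul_le_mul_of_nonneg_left h4 (by positivity)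
      linarith
    calc ENNReal.ofReal (α * t ^ (α - 1)) * F t
        ≤ ENNReal.ofReal (α * t ^ (α - 1)) * ENNReal.ofReal (α * x * t ^ (α - 1)) :=
          mul_le_mul_right hFle _
      _ = ENNReal.ofReal (α ^ 2 * x) * ENNReal.ofReal (t ^ (2 * α - 2)) := by
          rw [← ENNReal.ofReal_mul (by positivity), ← ENNReal.ofReal_mul (by positivity)]
          congr 1
          have e : t ^ (α - 1) * t ^ (α - 1) = t ^ (2 * α - 2) := by
            rw [← Real.rpow_add ht0]
            congr 1
            ring
          linear_combination α ^ 2 * x * e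
  have hint1 : ∫⁻ t in Set.Ioc (0:ℝ) x, ENNReal.ofReal (α * t ^ (α - 1)) * F t
      ≤ ENNReal.ofReal (α * x ^ (2 * α)) := by
    calc ∫⁻ t in Set.Ioc (0:ℝ) x, ENNReal.ofReal (α * t ^ (α - 1)) * F t
        ≤ ∫⁻ t in Set.Ioc (0:ℝ) x,
            ENNReal.ofReal (α * (α * x * x ^ (α - 1))) * ENNReal.ofReal (t ^ (α - 1)) :=
          setLIntegral_mono
            (measurable_const.mul (Measurable.ennreal_ofReal (by measurability))) hpt1
      _ = ENNReal.ofReal (α * (α * x * x ^ (α - 1)))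
            * ENNReal.ofReal ((x ^ (α - 1 + 1) - 0 ^ (α - 1 + 1)) / (α - 1 + 1)) := by
          rw [lintegral_const_mul' _ _ ENNReal.ofReal_ne_top,
            lint_rpow le_rfl hx.le (Or.inl (by linarith))]
      _ = ENNReal.ofReal (α * x ^ (2 * α)) := by
          rw [← ENNReal.ofReal_mul (by positivity)]
          congr 1
          have he : α - 1 + 1 = α := by ring
          rw [he, Real.zero_rpow (ne_of_gt hα), sub_zero]
          have e2 : x ^ (α - 1) * x ^ α = x ^ (2 * α - 1) := by
            rw [← Real.rpow_add hx]; congr 1; ring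
          have e3 : x * x ^ (2 * α - 1) = x ^ (2 * α) := by
            nth_rewrite 1 [← Real.rpow_one x]
            rw [← Real.rpow_add hx]; congr 1; ring
          calc α * (α * x * x ^ (α - 1)) * (x ^ α / α)
              = α * (x * (x ^ (α - 1) * x ^ α)) := by field_simp
            _ = α * x ^ (2 * α) := by rw [e2, e3]
  have hint2 : ∫⁻ t in Set.Ioc x (1:ℝ), ENNReal.ofReal (α * t ^ (α - 1)) * F t
      ≤ ENNReal.ofReal (α ^ 2 / (1 - 2 * α) * x ^ (2 * α)) := by
    have hr : (2 * α - 2 : ℝ) ≠ -1 := by intro h; linarith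
    calc ∫⁻ t in Set.Ioc x (1:ℝ), ENNReal.ofReal (α * t ^ (α - 1)) * F t
        ≤ ∫⁻ t in Set.Ioc x (1:ℝ),
            ENNReal.ofReal (α ^ 2 * x) * ENNReal.ofReal (t ^ (2 * α - 2)) :=
          setLIntegral_mono
            (measurable_const.mul (Measurable.ennreal_ofReal (by measurability))) hpt2
      _ = ENNReal.ofReal (α ^ 2 * x)
            * ENNReal.ofReal (((1:ℝ) ^ (2 * α - 2 + 1) - x ^ (2 * α - 2 + 1)) / (2 * α - 2 + 1)) := by
          rw [lintegral_const_mul' _ _ ENNReal.ofReal_ne_top,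
            lint_rpow hx.le hx1.le (Or.inr ⟨hr, hx⟩)]
      _ ≤ ENNReal.ofReal (α ^ 2 / (1 - 2 * α) * x ^ (2 * α)) := by
          rw [← ENNReal.ofReal_mul (by positivity)]
          refine ENNReal.ofReal_le_ofReal ?_
          have he : 2 * α - 2 + 1 = 2 * α - 1 := by ring
          rw [he, Real.one_rpow]
          have hpos : (0:ℝ) < 1 - 2 * α := by linarith
          have e3 : x * x ^ (2 * α - 1) = x ^ (2 * α) := by
            nth_rewrite 1 [← Real.rpow_one x]
            rw [← Real.rpow_add hx]; congr 1; ring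
          have key : α ^ 2 * x * ((1 - x ^ (2 * α - 1)) / (2 * α - 1))
              = α ^ 2 * (x * x ^ (2 * α - 1) - x) / (1 - 2 * α) := by
            have hne1 : (2 * α - 1 : ℝ) ≠ 0 := by linarith
            have hne2 : (1 - 2 * α : ℝ) ≠ 0 := by linarith
            rw [eq_div_iff hne2, mul_div_assoc', div_mul_eq_mul_div, div_eq_iff hne1]
            ring
          rw [key, e3, div_mul_eq_mul_div]
          gcongr
          nlinarith [hx.le, Real.rpow_nonneg hx.le (2 * α)]
  calc (∫⁻ t in Set.Ioc (0:ℝ) x, ENNReal.ofReal (α * t ^ (α - 1)) * F t)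
        + ∫⁻ t in Set.Ioc x (1:ℝ), ENNReal.ofReal (α * t ^ (α - 1)) * F t
      ≤ ENNReal.ofReal (α * x ^ (2 * α)) + ENNReal.ofReal (α ^ 2 / (1 - 2 * α) * x ^ (2 * α)) :=
        add_le_add hint1 hint2
    _ = ENNReal.ofReal ((α + α ^ 2 / (1 - 2 * α)) * x ^ (2 * α)) := by
        rw [← ENNReal.ofReal_add (by positivity)
          (mul_nonneg (div_nonneg (by positivity) (by linarith)) (Real.rpow_nonneg hx.le _))]
        congr 1
        ring

lemma swap_eq {α : ℝ} (hα : 0 < α) (x y : ℝ) :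
    (mu α).prod (mu α) {p : ℝ × ℝ | p.1 - p.2 ∈ Set.Ioc y (x + y)}
      = (mu α).prod (mu α) {p : ℝ × ℝ | p.2 - p.1 ∈ Set.Ioc y (x + y)} := by
  haveI : IsProbabilityMeasure (mu α) := ⟨mu_univ hα⟩
  have hA : MeasurableSet {p : ℝ × ℝ | p.2 - p.1 ∈ Set.Ioc y (x + y)} :=
    (measurable_snd.sub measurable_fst) measurableSet_Ioc
  have hs : {p : ℝ × ℝ | p.1 - p.2 ∈ Set.Ioc y (x + y)}
      = Prod.swap ⁻¹' {p : ℝ × ℝ | p.2 - p.1 ∈ Set.Ioc y (x + y)} := rfl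
  rw [hs, ← Measure.map_apply measurable_swap hA, Measure.prod_swap]

lemma prod_Ioc_one {α : ℝ} (hα : 0 < α) :
    (mu α).prod (mu α) (Set.Ioc (0:ℝ) 1 ×ˢ Set.Ioc (0:ℝ) 1) = 1 := by
  haveI : IsProbabilityMeasure (mu α) := ⟨mu_univ hα⟩
  rw [Measure.prod_prod, mu_Ioc hα le_rfl zero_le_one]
  simp [Real.zero_rpow (ne_of_gt hα)]

/-- For every `ε ∈ (0,1)` there exists a continuous random variable `W` on
`[0,1]`, expressible as `|X - Y|` for i.i.d. `X, Y` with density `α t^(α-1)`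
on `[0,1]` for a suitable `α ∈ (0,1/2)`, whose CDF `F_W` satisfies
`F_W (x+y) ≤ ε F_W x + F_W y` for all `0 ≤ x ≤ y`. -/
theorem strongly_subadditive_cdf_exists (ε : ℝ) (hε : ε ∈ Set.Ioo (0 : ℝ) 1) :
    ∃ α ∈ Set.Ioo (0 : ℝ) (1 / 2),
      ∃ (Ω : Type) (_ : MeasureSpace Ω) (P : Measure Ω)
        (_ : IsProbabilityMeasure P) (X Y : Ω → ℝ),
        Measurable X ∧ Measurable Y ∧ IndepFun X Y P ∧
        Measure.map X P = volume.withDensity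
          (fun t => if t ∈ Set.Ioc (0 : ℝ) 1 then ENNReal.ofReal (α * t ^ (α - 1)) else 0) ∧
        Measure.map Y P = volume.withDensity
          (fun t => if t ∈ Set.Ioc (0 : ℝ) 1 then ENNReal.ofReal (α * t ^ (α - 1)) else 0) ∧
        ∀ x y : ℝ, 0 ≤ x → x ≤ y →
          (P {ω | |X ω - Y ω| ≤ x + y}).toReal
            ≤ ε * (P {ω | |X ω - Y ω| ≤ x}).toReal
              + (P {ω | |X ω - Y ω| ≤ y}).toReal := by
  obtain ⟨hε0, hε1⟩ := hε
  have hα : (0:ℝ) < ε / 8 := by linarith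
  have hα2 : ε / 8 < 1 / 2 := by linarith
  set α := ε / 8 with hαdef
  haveI hPμ : IsProbabilityMeasure (mu α) := ⟨mu_univ hα⟩
  have hmap : Measure.map Prod.fst ((mu α).prod (mu α)) = mu α := by
    rw [Measure.map_fst_prod]; simp [measure_univ]
  have hmap2 : Measure.map Prod.snd ((mu α).prod (mu α)) = mu α := by
    rw [Measure.map_snd_prod]; simp [measure_univ]
  refine ⟨α, ⟨hα, hα2⟩, ℝ × ℝ, inferInstance, (mu α).prod (mu α), inferInstance,
    Prod.fst, Prod.snd, measurable_fst, measurable_snd, ?_, hmap, hmap2, ?_⟩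
  · rw [indepFun_iff_map_prod_eq_prod_map_map measurable_fst.aemeasurable
      measurable_snd.aemeasurable]
    have h1 : (fun ω : ℝ × ℝ => (ω.1, ω.2)) = id := rfl
    rw [h1, Measure.map_id, hmap, hmap2]
  · intro x y hx0 hxy
    by_cases hx0' : x = 0
    · subst hx0'
      simp only [zero_add]
      have h0 : 0 ≤ ε * (((mu α).prod (mu α)) {ω : ℝ × ℝ | |ω.1 - ω.2| ≤ 0}).toReal :=
        mul_nonneg hε0.le ENNReal.toReal_nonneg
      linarith
    · have hxpos : 0 < x := lt_of_le_of_ne hx0 (Ne.symm hx0')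
      by_cases hy1 : 1 ≤ y
      · have hfull : ((mu α).prod (mu α)) {ω : ℝ × ℝ | |ω.1 - ω.2| ≤ y} = 1 := by
          refine le_antisymm prob_le_one ?_
          rw [← prod_Ioc_one hα]
          refine measure_mono ?_
          intro p hp
          obtain ⟨⟨h1, h2⟩, h3, h4⟩ := hp
          simp only [Set.mem_setOf_eq]
          rw [abs_le]
          constructor <;> linarith
        have hle : (((mu α).prod (mu α)) {ω : ℝ × ℝ | |ω.1 - ω.2| ≤ x + y}).toReal ≤ 1 := by
          have h := ENNReal.toReal_mono ENNReal.one_ne_top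
            (prob_le_one (μ := (mu α).prod (mu α)) (s := {ω : ℝ × ℝ | |ω.1 - ω.2| ≤ x + y}))
          simpa using h
        have h0 : 0 ≤ ε * (((mu α).prod (mu α)) {ω : ℝ × ℝ | |ω.1 - ω.2| ≤ x}).toReal :=
          mul_nonneg hε0.le ENNReal.toReal_nonneg
        rw [hfull]
        simp only [ENNReal.toReal_one]
        linarith
      · push_neg at hy1
        have hx1 : x < 1 := lt_of_le_of_lt hxy hy1
        have hsub : {ω : ℝ × ℝ | |ω.1 - ω.2| ≤ x + y}
            ⊆ {ω : ℝ × ℝ | |ω.1 - ω.2| ≤ y}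
              ∪ ({p : ℝ × ℝ | p.2 - p.1 ∈ Set.Ioc y (x + y)}
                ∪ {p : ℝ × ℝ | p.1 - p.2 ∈ Set.Ioc y (x + y)}) := by
          intro p hp
          simp only [Set.mem_setOf_eq, Set.mem_union, Set.mem_Ioc] at *
          by_cases hd : |p.1 - p.2| ≤ y
          · exact Or.inl hd
          · push_neg at hd
            rcases le_total 0 (p.1 - p.2) with h | h
            · rw [abs_of_nonneg h] at hd hp
              exact Or.inr (Or.inr ⟨hd, hp⟩)
            · rw [abs_of_nonpos h] at hd hp
              exact Or.inr (Or.inl ⟨by linarith, by linarith⟩)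
        have hA := incr_bound hα hα2 hxpos hxy hx1
        have hB : ((mu α).prod (mu α)) {p : ℝ × ℝ | p.1 - p.2 ∈ Set.Ioc y (x + y)}
            ≤ ENNReal.ofReal ((α + α ^ 2 / (1 - 2 * α)) * x ^ (2 * α)) := by
          rw [swap_eq hα]; exact hA
        have hL := lower_bound hα hxpos hx1.le
        have hCnn : 0 ≤ (α + α ^ 2 / (1 - 2 * α)) * x ^ (2 * α) :=
          mul_nonneg (add_nonneg hα.le (div_nonneg (by positivity) (by linarith)))
            (Real.rpow_nonneg hxpos.le _)
        have hconst : (α + α ^ 2 / (1 - 2 * α)) * x ^ (2 * α)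
            + (α + α ^ 2 / (1 - 2 * α)) * x ^ (2 * α) ≤ ε * x ^ (2 * α) := by
          have h1 : α ^ 2 / (1 - 2 * α) ≤ α := by
            rw [div_le_iff₀ (by linarith)]
            nlinarith
          have h2 : (α + α ^ 2 / (1 - 2 * α)) + (α + α ^ 2 / (1 - 2 * α)) ≤ ε := by
            linarith
          nlinarith [Real.rpow_nonneg hxpos.le (2 * α)]
        have key : ((mu α).prod (mu α)) {ω : ℝ × ℝ | |ω.1 - ω.2| ≤ x + y}
            ≤ ((mu α).prod (mu α)) {ω : ℝ × ℝ | |ω.1 - ω.2| ≤ y}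
              + ENNReal.ofReal ε * ((mu α).prod (mu α)) {ω : ℝ × ℝ | |ω.1 - ω.2| ≤ x} := by
          calc ((mu α).prod (mu α)) {ω : ℝ × ℝ | |ω.1 - ω.2| ≤ x + y}
              ≤ ((mu α).prod (mu α)) ({ω : ℝ × ℝ | |ω.1 - ω.2| ≤ y}
                  ∪ ({p : ℝ × ℝ | p.2 - p.1 ∈ Set.Ioc y (x + y)}
                    ∪ {p : ℝ × ℝ | p.1 - p.2 ∈ Set.Ioc y (x + y)})) := measure_mono hsub
            _ ≤ ((mu α).prod (mu α)) {ω : ℝ × ℝ | |ω.1 - ω.2| ≤ y}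
                  + ((mu α).prod (mu α)) ({p : ℝ × ℝ | p.2 - p.1 ∈ Set.Ioc y (x + y)}
                    ∪ {p : ℝ × ℝ | p.1 - p.2 ∈ Set.Ioc y (x + y)}) := measure_union_le _ _
            _ ≤ ((mu α).prod (mu α)) {ω : ℝ × ℝ | |ω.1 - ω.2| ≤ y}
                  + (((mu α).prod (mu α)) {p : ℝ × ℝ | p.2 - p.1 ∈ Set.Ioc y (x + y)}
                    + ((mu α).prod (mu α)) {p : ℝ × ℝ | p.1 - p.2 ∈ Set.Ioc y (x + y)}) :=
                add_le_add_right (measure_union_le _ _) _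
            _ ≤ ((mu α).prod (mu α)) {ω : ℝ × ℝ | |ω.1 - ω.2| ≤ y}
                  + (ENNReal.ofReal ((α + α ^ 2 / (1 - 2 * α)) * x ^ (2 * α))
                    + ENNReal.ofReal ((α + α ^ 2 / (1 - 2 * α)) * x ^ (2 * α))) :=
                add_le_add_right (add_le_add hA hB) _
            _ ≤ ((mu α).prod (mu α)) {ω : ℝ × ℝ | |ω.1 - ω.2| ≤ y}
                  + ENNReal.ofReal (ε * x ^ (2 * α)) := by
                refine add_le_add_right ?_ _
                rw [← ENNReal.ofReal_add hCnn hCnn]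
                exact ENNReal.ofReal_le_ofReal hconst
            _ = ((mu α).prod (mu α)) {ω : ℝ × ℝ | |ω.1 - ω.2| ≤ y}
                  + ENNReal.ofReal ε * ENNReal.ofReal (x ^ (2 * α)) := by
                rw [ENNReal.ofReal_mul hε0.le]
            _ ≤ ((mu α).prod (mu α)) {ω : ℝ × ℝ | |ω.1 - ω.2| ≤ y}
                  + ENNReal.ofReal ε * ((mu α).prod (mu α)) {ω : ℝ × ℝ | |ω.1 - ω.2| ≤ x} :=
                add_le_add_right (mul_le_mul_right hL _) _
        have hfin1 : ((mu α).prod (mu α)) {ω : ℝ × ℝ | |ω.1 - ω.2| ≤ y} ≠ ⊤ :=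
          measure_ne_top _ _
        have hfin2 : ENNReal.ofReal ε
            * ((mu α).prod (mu α)) {ω : ℝ × ℝ | |ω.1 - ω.2| ≤ x} ≠ ⊤ :=
          ENNReal.mul_ne_top ENNReal.ofReal_ne_top (measure_ne_top _ _)
        have hto := ENNReal.toReal_mono (by
          exact ENNReal.add_ne_top.2 ⟨hfin1, hfin2⟩) key
        rw [ENNReal.toReal_add hfin1 hfin2, ENNReal.toReal_mul,
          ENNReal.toReal_ofReal hε0.le] at hto
        linarith
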